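/- arXiv:0812.1572 — 2 statements merged into one kernel-verified Lean document; each statement's English description precedes it below -/
import Mathlib

section
/- If b_1, …, b_n are unit vectors in ℝ^n with all pairwise inner products equal to x = (2γ² - n)/(2γ² + n(n-1)), then ∑_{i>j} ‖b_i - b_j‖ + γ‖∑_i b_i‖ = n·√(γ² + n(n-1)/2). -/
open RealInnerProductSpace


private lemma gauss_aux (n : ℕ) : (∑ i : Fin n, ((i : ℕ) : ℝ)) = n * (n - 1) / 2 := by
  induction n with
  | zero => simp
  | succ m ih =>
    rw [Fin.sum_univ_castSucc]
    simp only [Fin.coe_castSucc]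
    push_cast
    rw [ih]; ring

theorem value_at_symmetric_config (n : ℕ) (hn : 2 ≤ n) (γ : ℝ) (hγ : 0 < γ)
    (b : Fin n → EuclideanSpace ℝ (Fin n)) (hb : ∀ i, ‖b i‖ = 1)
    (hx : ∀ i j, i ≠ j →
      ⟪b i, b j⟫ = (2 * γ ^ 2 - n) / (2 * γ ^ 2 + n * (n - 1))) :
    (∑ i : Fin n, ∑ j ∈ Finset.univ.filter (fun j => j < i), ‖b i - b j‖)
        + γ * ‖∑ i : Fin n, b i‖
      = n * Real.sqrt (γ ^ 2 + n * (n - 1) / 2) := by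
  have hN : (2:ℝ) ≤ n := by exact_mod_cast hn
  set N : ℝ := (n : ℝ) with hNdef
  set D : ℝ := 2 * γ ^ 2 + N * (N - 1) with hDdef
  have hD : 0 < D := by nlinarith [sq_nonneg γ]
  set s : ℝ := Real.sqrt (2 * N ^ 2 / D) with hsdef
  have hs0 : 0 ≤ s := Real.sqrt_nonneg _
  have hs2 : s ^ 2 = 2 * N ^ 2 / D := by
    rw [hsdef, Real.sq_sqrt]; positivity
  have hdist : ∀ i j : Fin n, i ≠ j → ‖b i - b j‖ = s := by
    intro i j hij
    have h1 : ‖b i - b j‖ ^ 2 = 2 * N ^ 2 / D := by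
      rw [@norm_sub_sq_real, hb, hb, hx i j hij]
      rw [hDdef]
      field_simp [show (2 * γ ^ 2 + N * (N - 1)) ≠ 0 from by rw [← hDdef]; exact hD.ne']
      ring
    rw [hsdef, ← h1, Real.sqrt_sq (norm_nonneg _)]
  -- norm of the sum
  have hnorm : ‖∑ i : Fin n, b i‖ = γ * s := by
    have h1 : ‖∑ i : Fin n, b i‖ ^ 2 = (γ * s) ^ 2 := by
      rw [← real_inner_self_eq_norm_sq, sum_inner]
      have hrow : ∀ i : Fin n, ⟪b i, ∑ j : Fin n, b j⟫ = 1 + (N - 1) * ((2 * γ ^ 2 - N) / D) := by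
        intro i
        rw [inner_sum, ← Finset.add_sum_erase _ _ (Finset.mem_univ i)]
        have : ∑ j ∈ Finset.univ.erase i, ⟪b i, b j⟫
            = ∑ j ∈ Finset.univ.erase i, ((2 * γ ^ 2 - N) / D) := by
          apply Finset.sum_congr rfl
          intro j hj
          exact hx i j (Ne.symm (Finset.ne_of_mem_erase hj))
        rw [this, Finset.sum_const, Finset.card_erase_of_mem (Finset.mem_univ i),
          Finset.card_univ, Fintype.card_fin, real_inner_self_eq_norm_sq, hb]
        have hn1 : ((n - 1 : ℕ) : ℝ) = N - 1 := by
          push_cast [Nat.cast_sub (by omega : 1 ≤ n)]; ring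
        rw [nsmul_eq_mul, hn1]
        ring
      rw [Finset.sum_congr rfl (fun i _ => hrow i), Finset.sum_const, Finset.card_univ,
        Fintype.card_fin, nsmul_eq_mul, mul_pow, hs2]
      rw [hDdef]
      field_simp [show (2 * γ ^ 2 + N * (N - 1)) ≠ 0 from by rw [← hDdef]; exact hD.ne']
      ring
    have h2 : 0 ≤ γ * s := by positivity
    nlinarith [norm_nonneg (∑ i : Fin n, b i), h1]
  -- count
  have hcard : ∀ i : Fin n, (Finset.univ.filter (fun j => j < i)).card = (i : ℕ) := by
    intro i
    have : Finset.univ.filter (fun j => j < i) = Finset.Iio i := by ext j; simp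
    rw [this, Fin.card_Iio]
  have hgauss : (∑ i : Fin n, ((i : ℕ) : ℝ)) = N * (N - 1) / 2 := gauss_aux n
  have hsum : (∑ i : Fin n, ∑ j ∈ Finset.univ.filter (fun j => j < i), ‖b i - b j‖)
      = (N * (N - 1) / 2) * s := by
    rw [← hgauss, Finset.sum_mul]
    apply Finset.sum_congr rfl
    intro i _
    have : ∑ j ∈ Finset.univ.filter (fun j => j < i), ‖b i - b j‖
        = ∑ j ∈ Finset.univ.filter (fun j => j < i), s := by
      apply Finset.sum_congr rfl
      intro j hj
      exact hdist i j (ne_of_gt (Finset.mem_filter.mp hj).2)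
    rw [this, Finset.sum_const, nsmul_eq_mul, hcard]
  rw [hsum, hnorm]
  have hkey : N * (N - 1) / 2 * s + γ * (γ * s) = (D / 2) * s := by
    rw [hDdef]; ring
  rw [hkey]
  have hDd : γ ^ 2 + N * (N - 1) / 2 = D / 2 := by rw [hDdef]; ring
  rw [hDd]
  have h1 : (D / 2 * s) ^ 2 = (N * Real.sqrt (D / 2)) ^ 2 := by
    rw [mul_pow, mul_pow, hs2, Real.sq_sqrt (by positivity : (0:ℝ) ≤ D / 2)]
    field_simp
  have h2 : 0 ≤ D / 2 * s := by positivity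
  have h3 : 0 ≤ N * Real.sqrt (D / 2) := by positivity
  nlinarith [h1, h2, h3]
end

section
/- For any unit vectors b_1, …, b_n in a real inner product space and γ > 0, the quantity ∑_{i>j} ‖b_i - b_j‖ + γ‖∑_i b_i‖ is at most n·√(γ² + n(n-1)/2). -/
open Finset

theorem upper_bound_Bbar (n : ℕ) (hn : 2 ≤ n) (γ : ℝ) (hγ : 0 < γ)
    {H : Type*} [NormedAddCommGroup H] [InnerProductSpace ℝ H]
    (b : Fin n → H) (hb : ∀ i, ‖b i‖ = 1) :
    (∑ i : Fin n, ∑ j ∈ Finset.univ.filter (fun j => j < i), ‖b i - b j‖)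
        + γ * ‖∑ i : Fin n, b i‖
      ≤ n * Real.sqrt (γ ^ 2 + n * (n - 1) / 2) := by
  set T : ℝ := ‖∑ i : Fin n, b i‖ with hT
  set S : ℝ := ∑ i : Fin n, ∑ j ∈ Finset.univ.filter (fun j => j < i), ‖b i - b j‖ with hSdef
  set f : Fin n → Fin n → ℝ := fun i j => ‖b i - b j‖^2 with hf
  have hsymm : ∀ i j, f i j = f j i := fun i j => by simp [hf, norm_sub_rev]
  have hdiag : ∀ i, f i i = 0 := fun i => by simp [hf]
  have hT2 : T^2 = ∑ i : Fin n, ∑ j : Fin n, (inner ℝ (b i) (b j) : ℝ) := by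
    rw [hT, ← real_inner_self_eq_norm_sq, sum_inner]
    exact Finset.sum_congr rfl fun i _ => inner_sum _ _ _
  have hfull : ∑ i : Fin n, ∑ j : Fin n, f i j = 2*(n:ℝ)^2 - 2*T^2 := by
    have : ∀ i j, f i j = 2 - 2 * (inner ℝ (b i) (b j) : ℝ) := by
      intro i j
      show ‖b i - b j‖^2 = _
      rw [@norm_sub_sq_real, hb, hb]; ring
    simp_rw [this, Finset.sum_sub_distrib, ← Finset.mul_sum, ← hT2]
    simp
    ring
  have hsplit : ∀ i : Fin n, ∑ j : Fin n, f i j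
      = (∑ j ∈ univ.filter (fun j => j < i), f i j)
        + (∑ j ∈ univ.filter (fun j => i < j), f i j) := by
    intro i
    have : ∀ j : Fin n, f i j = (if j < i then f i j else 0) + (if i < j then f i j else 0) := by
      intro j
      rcases lt_trichotomy j i with h | h | h
      · simp [h, not_lt_of_gt h]
      · simp [h, hdiag]
      · simp [h, not_lt_of_gt h]
    rw [Finset.sum_congr rfl fun j _ => this j, Finset.sum_add_distrib,
      Finset.sum_filter, Finset.sum_filter]
  have hswap : ∑ i : Fin n, ∑ j ∈ univ.filter (fun j => i < j), f i j
      = ∑ i : Fin n, ∑ j ∈ univ.filter (fun j => j < i), f i j := by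
    simp_rw [Finset.sum_filter]
    rw [Finset.sum_comm]
    exact Finset.sum_congr rfl fun i _ => Finset.sum_congr rfl fun j _ => by
      simp [hsymm i j]
  have key : ∑ i : Fin n, ∑ j ∈ univ.filter (fun j => j < i), f i j = (n:ℝ)^2 - T^2 := by
    have h2 : 2 * ∑ i : Fin n, ∑ j ∈ univ.filter (fun j => j < i), f i j
        = 2*(n:ℝ)^2 - 2*T^2 := by
      rw [← hfull]
      simp_rw [hsplit, Finset.sum_add_distrib, hswap]; ring
    linarith
  -- Cauchy–Schwarz for S
  set M : ℝ := (n:ℝ) * ((n:ℝ) - 1) / 2 with hM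
  have hcard : ∑ i : Fin n, ((univ.filter (fun j => j < i)).card : ℝ) = M := by
    have h1 : ∀ i : Fin n, (univ.filter (fun j => j < i)).card = i.val := by
      intro i
      rw [show univ.filter (fun j => j < i) = Finset.Iio i by ext j; simp]
      exact Fin.card_Iio i
    simp_rw [h1]
    rw [hM]
    have h2 : ∑ i : Fin n, ((i : ℕ) : ℝ) = ((∑ i : Fin n, (i : ℕ) : ℕ) : ℝ) := by
      push_cast; ring
    rw [h2, Fin.sum_univ_eq_sum_range (fun k => k)]
    have h3 : (∑ k ∈ Finset.range n, k) * 2 = n * (n - 1) := Finset.sum_range_id_mul_two n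
    have h4 : ((∑ k ∈ Finset.range n, k : ℕ) : ℝ) * 2 = (n:ℝ) * ((n:ℝ) - 1) := by
      have h5 : ((n * (n-1) : ℕ) : ℝ) = (n:ℝ) * ((n:ℝ) - 1) := by
        push_cast [Nat.cast_sub (Nat.one_le_of_lt hn)]; ring
      rw [← h5, ← h3]; push_cast; ring
    linarith
  have hCS : S^2 ≤ M * ((n:ℝ)^2 - T^2) := by
    have h1 : ∀ i : Fin n, (∑ j ∈ univ.filter (fun j => j < i), ‖b i - b j‖)^2
        ≤ ((univ.filter (fun j => j < i)).card : ℝ) * ∑ j ∈ univ.filter (fun j => j < i), f i j := by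
      intro i
      exact sq_sum_le_card_mul_sum_sq
    -- global CS via sigma
    rw [hSdef, ← key, ← hcard]
    have hs : (∑ i : Fin n, ∑ j ∈ univ.filter (fun j => j < i), ‖b i - b j‖)
        = ∑ p ∈ univ.sigma (fun i : Fin n => univ.filter (fun j => j < i)), ‖b p.1 - b p.2‖ :=
      Finset.sum_sigma' _ _ _
    have hq : (∑ i : Fin n, ∑ j ∈ univ.filter (fun j => j < i), f i j)
        = ∑ p ∈ univ.sigma (fun i : Fin n => univ.filter (fun j => j < i)), f p.1 p.2 :=
      Finset.sum_sigma' _ _ _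
    have hc : ((univ.sigma (fun i : Fin n => univ.filter (fun j => j < i))).card : ℝ)
        = ∑ i : Fin n, ((univ.filter (fun j => j < i)).card : ℝ) := by
      rw [Finset.card_sigma]; push_cast; ring
    rw [hs, hq, ← hc]
    exact sq_sum_le_card_mul_sum_sq
  -- final step
  have hMpos : 0 < M := by
    rw [hM]
    have : (2:ℝ) ≤ (n:ℝ) := by exact_mod_cast hn
    nlinarith
  have hTnn : 0 ≤ T := norm_nonneg _
  have hSnn : 0 ≤ S := by
    rw [hSdef]
    exact Finset.sum_nonneg fun i _ => Finset.sum_nonneg fun j _ => norm_nonneg _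
  have hnpos : (0:ℝ) < n := by positivity
  set R : ℝ := Real.sqrt (γ^2 + M) with hR
  have hRnn : 0 ≤ R := Real.sqrt_nonneg _
  have hR2 : R^2 = γ^2 + M := Real.sq_sqrt (by positivity)
  clear_value f
  clear_value T S M R
  clear hT2 hfull hsplit hswap key hcard hsymm hdiag hb b hf hSdef hT
  have hRγ : γ ≤ R := by nlinarith [hR2, hRnn, hMpos, hγ, sq_nonneg (R - γ)]
  have hT2n : T^2 ≤ (n:ℝ)^2 := by nlinarith [hCS, sq_nonneg S, hMpos]
  have hTn : T ≤ (n:ℝ) := by nlinarith [hT2n, hTnn, hnpos]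
  have hX : 0 ≤ (n:ℝ) * R - γ * T := by
    have h6 := mul_nonneg (le_of_lt hnpos) (sub_nonneg.2 hRγ)
    have h7 := mul_nonneg hγ.le (sub_nonneg.2 hTn)
    nlinarith [h6, h7]
  have hfin : S ≤ (n:ℝ) * R - γ * T := by
    have e1 : ((n:ℝ)*R - γ*T)^2 = (n:ℝ)^2*(γ^2+M) - 2*(n:ℝ)*γ*(R*T) + γ^2*T^2 := by
      rw [← hR2]; ring
    have e2 : R^2*T^2 = (γ^2+M)*T^2 := by rw [hR2]
    have h5 : (0:ℝ) ≤ (n:ℝ)^2*γ^2 - 2*(n:ℝ)*γ*(R*T) + (γ^2+M)*T^2 := by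
      nlinarith [sq_nonneg ((n:ℝ)*γ - R*T), e2]
    have hsq : S^2 ≤ ((n:ℝ) * R - γ * T)^2 := by nlinarith [hCS, h5, e1]
    calc S = Real.sqrt (S^2) := (Real.sqrt_sq hSnn).symm
      _ ≤ Real.sqrt (((n:ℝ) * R - γ * T)^2) := Real.sqrt_le_sqrt hsq
      _ = (n:ℝ) * R - γ * T := Real.sqrt_sq hX
  linarith [hfin]
end
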